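/- Let r, p, n, k be positive integers with p dividing r. Then the ℂ-linear span of {φ_k(x_d) : d ∈ A_k(r,p,n)} in End(V^{⊗k}) equals the centralizer algebra End_{G(r,p,n)}(V^{⊗k}) = {F ∈ End(V^{⊗k}) : F ∘ g^{⊗k} = g^{⊗k} ∘ F for all g ∈ G(r,p,n)}. Moreover, φ_k(x_d) = 0 for every d ∈ A_k(r,p,n) having more than n blocks, and if n ≥ 2k then the family (φ_k(x_d))_{d ∈ A_k(r,p,n)} is linearly independent. -/

import Mathlib

open scoped Classical
open Matrix

noncomputable section

namespace Tanabe

/-! ## Tensor space model of `V^{⊗k}` for `V = ℂ^n`.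
A tensor is encoded by its coordinates, i.e. a function `(Fin k → Fin n) → ℂ`;
the basis vector `v_{i_1} ⊗ ⋯ ⊗ v_{i_k}` corresponds to the indicator function
of the tuple `(i_1, …, i_k)`. -/

abbrev TP (n k : ℕ) : Type := (Fin k → Fin n) → ℂ

/-- The linear endomorphism of `V^{⊗k}` with matrix `K` in the standard basis:
it sends the basis vector indexed by the tuple `i` to `∑ₒ K o i • (basis vector o)`. -/
def kernelMap (n k : ℕ) (K : (Fin k → Fin n) → (Fin k → Fin n) → ℂ) :
    TP n k →ₗ[ℂ] TP n k where
  toFun f := fun o => ∑ i : Fin k → Fin n, K o i * f i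
  map_add' f g := by
    funext o
    simp only [Pi.add_apply, mul_add]
    exact Finset.sum_add_distrib
  map_smul' c f := by
    funext o
    simp only [Pi.smul_apply, smul_eq_mul, RingHom.id_apply]
    rw [Finset.mul_sum]
    exact Finset.sum_congr rfl fun i _ => by ring

/-- The diagonal (tensor-power) action `g^{⊗k}` of a matrix `g` on `V^{⊗k}`. -/
def tensorPow (n k : ℕ) (g : Matrix (Fin n) (Fin n) ℂ) : TP n k →ₗ[ℂ] TP n k :=
  kernelMap n k fun o i => ∏ t : Fin k, g (o t) (i t)

/-! ## Set partitions of `{1,…,t,1′,…,t′}`.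
A set partition of `{1,…,t,1′,…,t′}` is encoded as a `Setoid` on `Fin t ⊕ Fin t`,
with `Sum.inl` the unprimed (top row) elements and `Sum.inr` the primed (bottom row)
elements; blocks are the equivalence classes. -/

abbrev SP (t : ℕ) : Type := Setoid (Fin t ⊕ Fin t)

/-- `N(B)`: number of top-row (unprimed) elements in the block `q` of `d`. -/
def topCt {t : ℕ} (d : SP t) (q : Quotient d) : ℕ :=
  Nat.card {a : Fin t // Quotient.mk d (Sum.inl a) = q}

/-- `M(B)`: number of bottom-row (primed) elements in the block `q` of `d`. -/
def botCt {t : ℕ} (d : SP t) (q : Quotient d) : ℕ :=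
  Nat.card {a : Fin t // Quotient.mk d (Sum.inr a) = q}

/-- `|d|`: the number of blocks of `d`. -/
def nBlocks {t : ℕ} (d : SP t) : ℕ := Nat.card (Quotient d)

/-- Coefficient of `φ_t(x_d)`: equals `1` if the equalities among the values of the
combined tuple `c` are *exactly* those prescribed by `d`, and `0` otherwise. -/
def coeX (n t : ℕ) (d : SP t) (c : Fin t ⊕ Fin t → Fin n) : ℂ :=
  if ∀ a b : Fin t ⊕ Fin t, d.r a b ↔ c a = c b then 1 else 0

/-- Coefficient of `φ_t(d)` (the diagram basis): equals `1` if the values of the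
combined tuple `c` agree on each block of `d`, and `0` otherwise. -/
def coeD (n t : ℕ) (d : SP t) (c : Fin t ⊕ Fin t → Fin n) : ℂ :=
  if ∀ a b : Fin t ⊕ Fin t, d.r a b → c a = c b then 1 else 0

/-- The operator `φ_t(x_d)` on `V^{⊗t}`. -/
def phiX (n t : ℕ) (d : SP t) : TP n t →ₗ[ℂ] TP n t :=
  kernelMap n t fun o i => coeX n t d (Sum.elim i o)

/-- The operator `φ_t(d)` on `V^{⊗t}` (diagram basis). -/
def phiD (n t : ℕ) (d : SP t) : TP n t →ₗ[ℂ] TP n t :=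
  kernelMap n t fun o i => coeD n t d (Sum.elim i o)

/-- `d ∈ Π_t(r)` : every block `B` satisfies `N(B) ≡ M(B) (mod r)`. -/
def inPi (r : ℕ) {t : ℕ} (d : SP t) : Prop :=
  ∀ q : Quotient d, (topCt d q : ℤ) ≡ (botCt d q : ℤ) [ZMOD (r : ℤ)]

/-- `d ∈ Λ_t(r,p,n)` (here `m = r/p`). -/
def inLambda (r p n : ℕ) {t : ℕ} (d : SP t) : Prop :=
  nBlocks d = n ∧
  (∀ q : Quotient d,
    ((topCt d q : ℤ) ≡ (botCt d q : ℤ) [ZMOD ((r / p : ℕ) : ℤ)]) ∧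
    ¬ ((topCt d q : ℤ) ≡ (botCt d q : ℤ) [ZMOD (r : ℤ)])) ∧
  (∀ q q' : Quotient d,
    (topCt d q : ℤ) - (botCt d q : ℤ) ≡ (topCt d q' : ℤ) - (botCt d q' : ℤ) [ZMOD (r : ℤ)])

/-- `d ∈ Θ_t(r,p,n)` (here `m = r/p`). -/
def inTheta (r p n : ℕ) {t : ℕ} (d : SP t) : Prop :=
  n < nBlocks d ∧
  (∀ q : Quotient d, (topCt d q : ℤ) ≡ (botCt d q : ℤ) [ZMOD ((r / p : ℕ) : ℤ)]) ∧
  ∃ q : Quotient d, ¬ ((topCt d q : ℤ) ≡ (botCt d q : ℤ) [ZMOD (r : ℤ)])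

/-- `d ∈ A_t(r,p,n) = Π_t(r) ∪ Λ_t(r,p,n) ∪ Θ_t(r,p,n)`. -/
def inA (r p n : ℕ) {t : ℕ} (d : SP t) : Prop :=
  inPi r d ∨ inLambda r p n d ∨ inTheta r p n d

/-- `d ∈ A_{k+1/2}` : `k+1` and `(k+1)′` lie in the same block. -/
def isHalf (k : ℕ) (d : SP (k + 1)) : Prop :=
  d.r (Sum.inl (Fin.last k)) (Sum.inr (Fin.last k))

/-- `d ∈ Π_t(r,p,n)` : `d ∈ A_t(r,p,n)` with at most `n` blocks. -/
def inPiRPN (r p n : ℕ) {t : ℕ} (d : SP t) : Prop :=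
  inA r p n d ∧ nBlocks d ≤ n

/-- `{φ_k(x_d) : d ∈ A_k(r,p,n)}`. -/
def TanSet (r p n k : ℕ) : Set (TP n k →ₗ[ℂ] TP n k) :=
  {T | ∃ d : SP k, inA r p n d ∧ T = phiX n k d}

/-- `{φ_{k+1}(x_d) : d ∈ A_{k+1/2}(r,p,n)}` (as endomorphisms of `V^{⊗(k+1)}`). -/
def TanSetHalf (r p n k : ℕ) : Set (TP n (k + 1) →ₗ[ℂ] TP n (k + 1)) :=
  {T | ∃ d : SP (k + 1), (inA r p n d ∧ isHalf k d) ∧ T = phiX n (k + 1) d}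

/-! ## The groups `G(r,p,n)` and `L(r,p,n)` as matrix groups. -/

/-- The monomial matrix with underlying permutation `π` and weights `a` :
its `(i,j)` entry is `a j` if `i = π j` and `0` otherwise, so that it maps
`v_j ↦ a j • v_{π j}`. -/
def monoMat (n : ℕ) (π : Equiv.Perm (Fin n)) (a : Fin n → ℂ) :
    Matrix (Fin n) (Fin n) ℂ :=
  Matrix.of fun i j => if i = π j then a j else 0

/-- `G(r,p,n)` as a set of matrices: matrices with exactly one nonzero entry in each
row and column, whose nonzero entries are `r`-th roots of unity, and such that the
`m = r/p`-th power of the product of the nonzero entries is `1`. -/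
def GSet (r p n : ℕ) : Set (Matrix (Fin n) (Fin n) ℂ) :=
  {g | ∃ (π : Equiv.Perm (Fin n)) (a : Fin n → ℂ),
    (∀ i, a i ^ r = 1) ∧ (∏ i, a i) ^ (r / p) = 1 ∧ g = monoMat n π a}

/-- The last index of `Fin n` (position `n` in 1-indexed notation). -/
def lastIdx (n : ℕ) (hn : 0 < n) : Fin n := ⟨n - 1, by omega⟩

/-- `L(r,p,n)` as a set of matrices: elements of `G(r,p,n)` whose `(n,n)` entry
is nonzero. -/
def LSet (r p n : ℕ) (hn : 0 < n) : Set (Matrix (Fin n) (Fin n) ℂ) :=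
  {g | g ∈ GSet r p n ∧ g (lastIdx n hn) (lastIdx n hn) ≠ 0}

/-- The centralizer algebra `End_{G(r,p,n)}(V^{⊗k})`. -/
def centG (r p n k : ℕ) : Set (TP n k →ₗ[ℂ] TP n k) :=
  {F | ∀ g ∈ GSet r p n, F ∘ₗ tensorPow n k g = tensorPow n k g ∘ₗ F}

/-- The subspace `W = V^{⊗k} ⊗ ℂ v_n` of `V^{⊗(k+1)}` : coordinate functions
supported on tuples whose last entry is the last index. -/
def Wsub (n k : ℕ) (hn : 0 < n) : Submodule ℂ (TP n (k + 1)) where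
  carrier := {f | ∀ j : Fin (k + 1) → Fin n, j (Fin.last k) ≠ lastIdx n hn → f j = 0}
  add_mem' := by
    intro a b ha hb j hj
    simp [Pi.add_apply, ha j hj, hb j hj]
  zero_mem' := by intro j hj; rfl
  smul_mem' := by
    intro c a ha j hj
    simp [Pi.smul_apply, ha j hj]


/-! ## Group structure -/

abbrev GLn (n : ℕ) := Matrix.GeneralLinearGroup (Fin n) ℂ

lemma monoMat_mul (n : ℕ) (π σ : Equiv.Perm (Fin n)) (a b : Fin n → ℂ) :
    monoMat n π a * monoMat n σ b = monoMat n (π * σ) (fun j => a (σ j) * b j) := by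
  ext i j
  simp only [monoMat, Matrix.mul_apply, Matrix.of_apply, mul_ite, mul_zero, ite_mul, zero_mul]
  rw [Finset.sum_ite_eq' Finset.univ (σ j)]
  simp [Equiv.Perm.mul_apply]
  congr

lemma monoMat_one (n : ℕ) : monoMat n 1 (fun _ => (1 : ℂ)) = 1 := by
  ext i j
  simp [monoMat, Matrix.one_apply]
  congr

lemma one_mem_GSet (r p n : ℕ) : (1 : Matrix (Fin n) (Fin n) ℂ) ∈ GSet r p n :=
  ⟨1, fun _ => 1, fun _ => one_pow r, by simp, (monoMat_one n).symm⟩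

lemma mul_mem_GSet {r p n : ℕ} {g h : Matrix (Fin n) (Fin n) ℂ}
    (hg : g ∈ GSet r p n) (hh : h ∈ GSet r p n) : g * h ∈ GSet r p n := by
  obtain ⟨π, a, ha, hpa, rfl⟩ := hg
  obtain ⟨σ, b, hb, hpb, rfl⟩ := hh
  refine ⟨π * σ, fun j => a (σ j) * b j, fun i => by rw [mul_pow, ha, hb, one_mul], ?_,
    monoMat_mul n π σ a b⟩
  have h1 : (∏ i, (a (σ i) * b i)) = (∏ i, a i) * ∏ i, b i := by
    rw [Finset.prod_mul_distrib, Equiv.prod_comp σ a]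
  rw [h1, mul_pow, hpa, hpb, one_mul]

lemma a_ne_zero {r : ℕ} (hr : 0 < r) {a : ℂ} (ha : a ^ r = 1) : a ≠ 0 := by
  intro h0
  rw [h0, zero_pow hr.ne'] at ha
  exact zero_ne_one ha

lemma monoMat_mul_inv (n : ℕ) (π : Equiv.Perm (Fin n)) (a : Fin n → ℂ)
    (ha : ∀ i, a i ≠ 0) :
    monoMat n π a * monoMat n π⁻¹ (fun j => (a (π⁻¹ j))⁻¹) = 1 := by
  simp only [monoMat_mul]
  rw [mul_inv_cancel,
    show (fun j => a (π⁻¹ j) * (a (π⁻¹ j))⁻¹) = fun _ : Fin n => (1 : ℂ) from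
      funext fun j => mul_inv_cancel₀ (ha _),
    monoMat_one]

/-- The value of the inverse of a unit whose underlying matrix is a monomial matrix. -/
lemma gl_inv_val {n : ℕ} (g : GLn n) (π : Equiv.Perm (Fin n)) (a : Fin n → ℂ)
    (ha : ∀ i, a i ≠ 0) (hg : (↑g : Matrix (Fin n) (Fin n) ℂ) = monoMat n π a) :
    (↑g⁻¹ : Matrix (Fin n) (Fin n) ℂ) = monoMat n π⁻¹ (fun j => (a (π⁻¹ j))⁻¹) := by
  have hmul : (↑g : Matrix (Fin n) (Fin n) ℂ) *
      monoMat n π⁻¹ (fun j => (a (π⁻¹ j))⁻¹) = 1 := by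
    rw [hg]; exact monoMat_mul_inv n π a ha
  calc (↑g⁻¹ : Matrix (Fin n) (Fin n) ℂ)
      = ↑g⁻¹ * ((↑g : Matrix (Fin n) (Fin n) ℂ) *
          monoMat n π⁻¹ (fun j => (a (π⁻¹ j))⁻¹)) := by rw [hmul, mul_one]
    _ = ((↑g⁻¹ : Matrix (Fin n) (Fin n) ℂ) * ↑g) *
          monoMat n π⁻¹ (fun j => (a (π⁻¹ j))⁻¹) := by rw [mul_assoc]
    _ = monoMat n π⁻¹ (fun j => (a (π⁻¹ j))⁻¹) := by
          rw [← Units.val_mul, inv_mul_cancel, Units.val_one, one_mul]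

lemma inv_mem_GSet {r p n : ℕ} (hr : 0 < r) {g : GLn n}
    (hg : (↑g : Matrix (Fin n) (Fin n) ℂ) ∈ GSet r p n) :
    (↑g⁻¹ : Matrix (Fin n) (Fin n) ℂ) ∈ GSet r p n := by
  obtain ⟨π, a, ha, hpa, hgm⟩ := hg
  have hane : ∀ i, a i ≠ 0 := fun i => a_ne_zero hr (ha i)
  refine ⟨π⁻¹, fun j => (a (π⁻¹ j))⁻¹, fun i => by rw [inv_pow, ha, inv_one], ?_,
    gl_inv_val g π a hane hgm⟩
  rw [Finset.prod_inv_distrib, Equiv.prod_comp π⁻¹ a, inv_pow, hpa, inv_one]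

/-- The complex reflection group `G(r,p,n)` as a subgroup of `GL_n(ℂ)`. -/
def GGroup (r p n : ℕ) (hr : 0 < r) : Subgroup (GLn n) where
  carrier := {g | (↑g : Matrix (Fin n) (Fin n) ℂ) ∈ GSet r p n}
  one_mem' := by
    show (↑(1 : GLn n) : Matrix (Fin n) (Fin n) ℂ) ∈ GSet r p n
    rw [Units.val_one]; exact one_mem_GSet r p n
  mul_mem' := by
    intro g h hg hh
    show (↑(g * h) : Matrix (Fin n) (Fin n) ℂ) ∈ GSet r p n
    rw [Units.val_mul]; exact mul_mem_GSet hg hh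
  inv_mem' := by
    intro g hg
    exact inv_mem_GSet hr hg

lemma monoMat_last {n : ℕ} (hn : 0 < n) (π : Equiv.Perm (Fin n)) (a : Fin n → ℂ)
    (h : monoMat n π a (lastIdx n hn) (lastIdx n hn) ≠ 0) :
    π (lastIdx n hn) = lastIdx n hn ∧ a (lastIdx n hn) ≠ 0 := by
  by_cases hp : lastIdx n hn = π (lastIdx n hn)
  · refine ⟨hp.symm, ?_⟩
    intro h0
    apply h
    simp [monoMat, ← hp, h0]
  · exfalso; apply h; simp [monoMat, hp]

lemma monoMat_last_entry {n : ℕ} (hn : 0 < n) (π : Equiv.Perm (Fin n)) (a : Fin n → ℂ)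
    (hp : π (lastIdx n hn) = lastIdx n hn) :
    monoMat n π a (lastIdx n hn) (lastIdx n hn) = a (lastIdx n hn) := by
  simp [monoMat, hp]

/-- The subgroup `L(r,p,n)` of `G(r,p,n)` (matrices with nonzero `(n,n)` entry). -/
def LGroup (r p n : ℕ) (hr : 0 < r) (hn : 0 < n) : Subgroup (GLn n) where
  carrier := {g | (↑g : Matrix (Fin n) (Fin n) ℂ) ∈ LSet r p n hn}
  one_mem' := by
    refine ⟨?_, ?_⟩
    · show (↑(1 : GLn n) : Matrix (Fin n) (Fin n) ℂ) ∈ GSet r p n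
      rw [Units.val_one]; exact one_mem_GSet r p n
    · rw [Units.val_one]
      simp [Matrix.one_apply]
  mul_mem' := by
    rintro g h ⟨hg, hge⟩ ⟨hh, hhe⟩
    refine ⟨?_, ?_⟩
    · show (↑(g * h) : Matrix (Fin n) (Fin n) ℂ) ∈ GSet r p n
      rw [Units.val_mul]; exact mul_mem_GSet hg hh
    · obtain ⟨π, a, ha, hpa, hgm⟩ := hg
      obtain ⟨σ, b, hb, hpb, hhm⟩ := hh
      rw [hgm] at hge
      rw [hhm] at hhe
      obtain ⟨hπ, ha0⟩ := monoMat_last hn π a hge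
      obtain ⟨hσ, hb0⟩ := monoMat_last hn σ b hhe
      rw [Units.val_mul, hgm, hhm, monoMat_mul]
      rw [monoMat_last_entry hn _ _ (by simp [Equiv.Perm.mul_apply, hσ, hπ])]
      simp only [hσ]
      exact mul_ne_zero ha0 hb0
  inv_mem' := by
    rintro g ⟨hg, hge⟩
    obtain ⟨π, a, ha, hpa, hgm⟩ := hg
    have hane : ∀ i, a i ≠ 0 := fun i => a_ne_zero hr (ha i)
    rw [hgm] at hge
    obtain ⟨hπ, ha0⟩ := monoMat_last hn π a hge
    refine ⟨inv_mem_GSet hr ⟨π, a, ha, hpa, hgm⟩, ?_⟩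
    rw [gl_inv_val g π a hane hgm]
    have hπi : π⁻¹ (lastIdx n hn) = lastIdx n hn := by
      conv_lhs => rw [← hπ]
      simp
    rw [monoMat_last_entry hn _ _ hπi]
    simp only [hπi]
    exact inv_ne_zero ha0

lemma GGroup_le (r p n : ℕ) (hr : 0 < r) : GGroup r p n hr ≤ GGroup r 1 n hr := by
  rintro g ⟨π, a, ha, hpa, hgm⟩
  refine ⟨π, a, ha, ?_, hgm⟩
  rw [Nat.div_one, ← Finset.prod_pow]
  simp [ha]

lemma LGroup_le (r p n : ℕ) (hr : 0 < r) (hn : 0 < n) :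
    LGroup r p n hr hn ≤ LGroup r 1 n hr hn := by
  rintro g ⟨hg, hge⟩
  exact ⟨GGroup_le r p n hr hg, hge⟩

lemma LGroup_le_GGroup (r p n : ℕ) (hr : 0 < r) (hn : 0 < n) :
    LGroup r p n hr hn ≤ GGroup r p n hr := fun _ hg => hg.1

lemma LGroup_le_G1 (r p n : ℕ) (hr : 0 < r) (hn : 0 < n) :
    LGroup r p n hr hn ≤ GGroup r 1 n hr :=
  le_trans (LGroup_le_GGroup r p n hr hn) (GGroup_le r p n hr)

/-! ## Representation-theoretic notions -/

section Reps

variable {G : Type*} [Monoid G] {V : Type*} [AddCommGroup V] [Module ℂ V]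

/-- A submodule invariant under a representation. -/
def RepInvariant (ρ : Representation ℂ G V) (q : Submodule ℂ V) : Prop :=
  ∀ (g : G), ∀ v ∈ q, ρ g v ∈ q

/-- Irreducibility of a representation. -/
def RepIrreducible (ρ : Representation ℂ G V) : Prop :=
  Nontrivial V ∧ ∀ q : Submodule ℂ V, RepInvariant ρ q → q = ⊥ ∨ q = ⊤

/-- Irreducibility of an invariant subspace, as a subrepresentation. -/
def SubIrreducible (ρ : Representation ℂ G V) (q : Submodule ℂ V) : Prop :=
  q ≠ ⊥ ∧ ∀ q' : Submodule ℂ V, q' ≤ q → RepInvariant ρ q' → q' = ⊥ ∨ q' = q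

/-- Two (invariant) subspaces are isomorphic as subrepresentations: there is a
`ℂ`-linear equivalence between them intertwining the action. -/
def IsSubrepIso (ρ : Representation ℂ G V) (q q' : Submodule ℂ V) : Prop :=
  ∃ e : q ≃ₗ[ℂ] q', ∀ (g : G) (x : V) (hx : x ∈ q) (hgx : ρ g x ∈ q),
    ((e ⟨ρ g x, hgx⟩ : q') : V) = ρ g ((e ⟨x, hx⟩ : q') : V)

/-- A representation is multiplicity free: it is an (internal) direct sum of
pairwise non-isomorphic irreducible subrepresentations. -/
def RepMultFree (ρ : Representation ℂ G V) : Prop :=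
  ∃ (ι : Type) (_ : Fintype ι) (W : ι → Submodule ℂ V),
    (∀ i, RepInvariant ρ (W i)) ∧
    (∀ i, SubIrreducible ρ (W i)) ∧
    iSupIndep W ∧ (⨆ i, W i) = ⊤ ∧
    (∀ i j, i ≠ j → ¬ IsSubrepIso ρ (W i) (W j))

/-- Restriction of a representation of `K` to a subgroup `H ≤ K`. -/
def restrictRep {G : Type*} [Group G] {H K : Subgroup G} (h : H ≤ K)
    (ρ : Representation ℂ ↥K V) : Representation ℂ ↥H V :=
  MonoidHom.comp ρ (Subgroup.inclusion h)

end Reps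

/-! ## The elements `ζ_i^l ζ_j^{-l} s_{ij}` and the central elements `κ` -/

/-- `ζ = exp(2πi/r)`, a primitive `r`-th root of unity. -/
def zeta (r : ℕ) : ℂ := Complex.exp (2 * Real.pi * Complex.I / r)

lemma zeta_pow_self {r : ℕ} (hr : 0 < r) : zeta r ^ r = 1 := by
  rw [zeta, ← Complex.exp_nat_mul]
  rw [show (r : ℂ) * (2 * Real.pi * Complex.I / r) = 2 * Real.pi * Complex.I by
    rw [mul_div_assoc']
    exact mul_div_cancel_left₀ _ (Nat.cast_ne_zero.mpr hr.ne')]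
  exact Complex.exp_two_pi_mul_I

lemma zeta_ne_zero (r : ℕ) : zeta r ≠ 0 := Complex.exp_ne_zero _

/-- Weights of the monomial matrix `ζ_i^l ζ_j^{-l} s_{ij}` : `ζ^l` in position `i`,
`ζ^{-l}` in position `j`, `1` elsewhere. -/
def zijWt (r l : ℕ) {n : ℕ} (i j : Fin n) : Fin n → ℂ :=
  fun t => if t = i then zeta r ^ l else if t = j then (zeta r ^ l)⁻¹ else 1

/-- The matrix `ζ_i^l ζ_j^{-l} s_{ij}`. -/
def zijMat (n r l : ℕ) (i j : Fin n) : Matrix (Fin n) (Fin n) ℂ :=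
  monoMat n (Equiv.swap i j) (zijWt r l i j)

lemma zijWt_ne_zero (r l : ℕ) {n : ℕ} (i j : Fin n) (t : Fin n) :
    zijWt r l i j t ≠ 0 := by
  unfold zijWt
  split_ifs
  · exact pow_ne_zero _ (zeta_ne_zero r)
  · exact inv_ne_zero (pow_ne_zero _ (zeta_ne_zero r))
  · exact one_ne_zero

lemma zijWt_pow {r l : ℕ} (hr : 0 < r) {n : ℕ} (i j : Fin n) (t : Fin n) :
    zijWt r l i j t ^ r = 1 := by
  unfold zijWt
  split_ifs
  · rw [← pow_mul, mul_comm, pow_mul, zeta_pow_self hr, one_pow]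
  · rw [inv_pow, ← pow_mul, mul_comm, pow_mul, zeta_pow_self hr, one_pow, inv_one]
  · exact one_pow r

lemma zijWt_prod {r l : ℕ} {n : ℕ} {i j : Fin n} (hij : i ≠ j) :
    (∏ t, zijWt r l i j t) = 1 := by
  have hfun : (fun t => zijWt r l i j t) =
      fun t => (if t = i then zeta r ^ l else 1) * (if t = j then (zeta r ^ l)⁻¹ else 1) := by
    funext t
    by_cases h1 : t = i <;> by_cases h2 : t = j
    · exact absurd (h1.symm.trans h2) hij
    · simp [zijWt, h1, h2, hij]
    · simp [zijWt, h1, h2, hij, Ne.symm hij]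
    · simp [zijWt, h1, h2]
  rw [hfun, Finset.prod_mul_distrib, Finset.prod_ite_eq' Finset.univ i,
    Finset.prod_ite_eq' Finset.univ j]
  simp [mul_inv_cancel₀ (pow_ne_zero l (zeta_ne_zero r))]

lemma zij_mem_GSet (r p n l : ℕ) (hr : 0 < r) (i j : Fin n) (hij : i ≠ j) :
    zijMat n r l i j ∈ GSet r p n := by
  refine ⟨Equiv.swap i j, zijWt r l i j, zijWt_pow hr i j, ?_, rfl⟩
  rw [zijWt_prod hij, one_pow]

/-- A monomial matrix with nonzero weights, as an element of `GL_n(ℂ)`. -/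
def monoUnit (n : ℕ) (π : Equiv.Perm (Fin n)) (a : Fin n → ℂ) (ha : ∀ i, a i ≠ 0) :
    GLn n where
  val := monoMat n π a
  inv := monoMat n π⁻¹ (fun j => (a (π⁻¹ j))⁻¹)
  val_inv := monoMat_mul_inv n π a ha
  inv_val := by
    simp only [monoMat_mul]
    rw [inv_mul_cancel,
      show (fun j => (a (π⁻¹ (π j)))⁻¹ * a j) = fun _ : Fin n => (1 : ℂ) from
        funext fun j => by rw [show π⁻¹ (π j) = j from π.symm_apply_apply j, inv_mul_cancel₀ (ha _)],
      monoMat_one]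

/-- The element `ζ_i^l ζ_j^{-l} s_{ij}` of `G(r,p,n)`. -/
def zijG (r p n l : ℕ) (hr : 0 < r) (i j : Fin n) (hij : i ≠ j) : ↥(GGroup r p n hr) :=
  ⟨monoUnit n (Equiv.swap i j) (zijWt r l i j) (zijWt_ne_zero r l i j),
   zij_mem_GSet r p n l hr i j hij⟩

/-- The element `κ_{r,n} = (1/r)·Σ_{l<r} Σ_{i<j} ζ_i^l ζ_j^{-l} s_{ij}` of the group
algebra `ℂ[G(r,p,n)]`. -/
def kappaGA (r p n : ℕ) (hr : 0 < r) : MonoidAlgebra ℂ ↥(GGroup r p n hr) :=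
  (1 / (r : ℂ)) • ∑ l ∈ Finset.range r, ∑ i : Fin n, ∑ j : Fin n,
    if h : i < j then MonoidAlgebra.single (zijG r p n l hr i j h.ne) 1 else 0

lemma zijL_last (r l : ℕ) {n : ℕ} (hn : 0 < n) (i j : Fin n)
    (hi : i ≠ lastIdx n hn) (hj : j ≠ lastIdx n hn) :
    zijMat n r l i j (lastIdx n hn) (lastIdx n hn) ≠ 0 := by
  have hswap : Equiv.swap i j (lastIdx n hn) = lastIdx n hn :=
    Equiv.swap_apply_of_ne_of_ne (Ne.symm hi) (Ne.symm hj)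
  rw [zijMat, monoMat_last_entry hn _ _ hswap]
  exact zijWt_ne_zero r l i j _

/-- The element `ζ_i^l ζ_j^{-l} s_{ij}` of `L(r,p,n)`, for `i, j ≤ n-1`. -/
def zijL (r p n l : ℕ) (hr : 0 < r) (hn : 0 < n) (i j : Fin n) (hij : i ≠ j)
    (hi : i ≠ lastIdx n hn) (hj : j ≠ lastIdx n hn) : ↥(LGroup r p n hr hn) :=
  ⟨monoUnit n (Equiv.swap i j) (zijWt r l i j) (zijWt_ne_zero r l i j),
   ⟨zij_mem_GSet r p n l hr i j hij, zijL_last r l hn i j hi hj⟩⟩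

/-- The element `κ_{r,n-1} = (1/r)·Σ_{l<r} Σ_{1≤i<j≤n-1} ζ_i^l ζ_j^{-l} s_{ij}` of the
group algebra `ℂ[L(r,p,n)]`. -/
def kappaLA (r p n : ℕ) (hr : 0 < r) (hn : 0 < n) :
    MonoidAlgebra ℂ ↥(LGroup r p n hr hn) :=
  (1 / (r : ℂ)) • ∑ l ∈ Finset.range r, ∑ i : Fin n, ∑ j : Fin n,
    if h : i < j ∧ (j : ℕ) < n - 1 then
      MonoidAlgebra.single
        (zijL r p n l hr hn i j h.1.ne
          (by
            refine Fin.ne_of_val_ne ?_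
            have h1 : (i : ℕ) < (j : ℕ) := h.1
            have h2 : (j : ℕ) < n - 1 := h.2
            show (i : ℕ) ≠ n - 1
            omega)
          (by
            refine Fin.ne_of_val_ne ?_
            have h2 : (j : ℕ) < n - 1 := h.2
            show (j : ℕ) ≠ n - 1
            omega)) 1
    else 0

/-! ## The induced representation of statement on `Ind_L^G σ` -/

/-- The right regular representation of a group `G` on the space of functions
`G → ℂ`, given by `(x · f)(g) = f(g x)`. -/
def regRep (G : Type*) [Group G] : Representation ℂ G (G → ℂ) where
  toFun x :=
    { toFun := fun f => fun g => f (g * x)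
      map_add' := fun f g => rfl
      map_smul' := fun c f => rfl }
  map_one' := by
    refine LinearMap.ext fun f => ?_
    funext g
    simp
  map_mul' x y := by
    refine LinearMap.ext fun f => ?_
    funext g
    simp [Module.End.mul_apply, mul_assoc]

/-- The space of functions `f : G(r,p,n) → ℂ` with `f(hg) = σ(h)·f(g)` for all
`h ∈ L(r,p,n)`, where `σ(h)` is the `(n,n)` entry of `h`. -/
def IndSig (r p n : ℕ) (hr : 0 < r) (hn : 0 < n) :
    Submodule ℂ (↥(GGroup r p n hr) → ℂ) where
  carrier := {f | ∀ h g : ↥(GGroup r p n hr),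
    ((h : GLn n) : Matrix (Fin n) (Fin n) ℂ) ∈ LSet r p n hn →
    f (h * g) = ((h : GLn n) : Matrix (Fin n) (Fin n) ℂ) (lastIdx n hn) (lastIdx n hn) * f g}
  add_mem' := by
    intro a b ha hb h g hh
    simp [ha h g hh, hb h g hh, mul_add]
  zero_mem' := by intro h g hh; simp
  smul_mem' := by
    intro c a ha h g hh
    simp [ha h g hh]
    ring

lemma IndSig_invariant (r p n : ℕ) (hr : 0 < r) (hn : 0 < n) :
    RepInvariant (regRep ↥(GGroup r p n hr)) (IndSig r p n hr hn) := by
  intro x f hf h g hh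
  show f ((h * g) * x) = _ * f (g * x)
  rw [mul_assoc]
  exact hf h (g * x) hh

/-- The natural representation of `G(r,p,n)` on `ℂ^n` by matrix-vector
multiplication. -/
def natRep (r p n : ℕ) (hr : 0 < r) : Representation ℂ ↥(GGroup r p n hr) (Fin n → ℂ) where
  toFun g := Matrix.mulVecLin ((g : GLn n) : Matrix (Fin n) (Fin n) ℂ)
  map_one' := by
    simp only [OneMemClass.coe_one, Units.val_one, Matrix.mulVecLin_one]
    rfl
  map_mul' g h := by
    simp only [Subgroup.coe_mul, Units.val_mul, Matrix.mulVecLin_mul]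
    rw [Module.End.mul_eq_comp]

/-! ## The operators `Z_{t,r}` and `Z_{t+1/2,r}` -/

/-- `S ∪ S′` as a finite subset of `Fin t ⊕ Fin t`. -/
def SSfin {t : ℕ} (S : Finset (Fin t)) : Finset (Fin t ⊕ Fin t) :=
  Finset.univ.filter fun x => Sum.elim (· ∈ S) (· ∈ S) x

/-- The set partition `b_S` with blocks `S ∪ S′` and `{l,l′}` for `l ∉ S`. -/
def bS {t : ℕ} (S : Finset (Fin t)) : SP t :=
  Setoid.ker fun x : Fin t ⊕ Fin t =>
    if x ∈ SSfin S then (none : Option (Fin t ⊕ Fin t)) else some x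

/-- The set partition `d_I` with blocks `I`, `(S ∪ S′) \ I` and `{l,l′}` for `l ∉ S`. -/
def dI {t : ℕ} (S : Finset (Fin t)) (I : Finset (Fin t ⊕ Fin t)) : SP t :=
  Setoid.ker fun x : Fin t ⊕ Fin t =>
    if x ∈ I then (Sum.inl true : Bool ⊕ (Fin t ⊕ Fin t))
    else if x ∈ SSfin S then Sum.inl false else Sum.inr x

/-- `N(I)` : the number of top-row (unprimed) elements of `I`. -/
def NIc {t : ℕ} (I : Finset (Fin t ⊕ Fin t)) : ℕ :=
  (I.filter fun x => x.isLeft = true).card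

/-- `M(I)` : the number of bottom-row (primed) elements of `I`. -/
def MIc {t : ℕ} (I : Finset (Fin t ⊕ Fin t)) : ℕ :=
  (I.filter fun x => x.isRight = true).card

/-- The operator `Z_{t,r}` on `V^{⊗t}`.  The inner sum over unordered partitions
`{I, (S∪S′)∖I}` (each counted once) is written as `1/2` times the sum over ordered
proper nonempty subsets `I` of `S ∪ S′`; these agree since `d_I = d_{(S∪S′)∖I}` and
the signs coincide. -/
def Zop (r n t : ℕ) : TP n t →ₗ[ℂ] TP n t :=
  (n.choose 2 : ℂ) • LinearMap.id +
  ∑ S ∈ (Finset.univ : Finset (Fin t)).powerset.filter (fun S => S ≠ ∅),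
    ((-1 : ℂ) ^ S.card) •
      (((n : ℂ) - 1) • phiD n t (bS S) +
        (1 / 2 : ℂ) •
          ∑ I ∈ (SSfin S).powerset.filter (fun I =>
              I ≠ ∅ ∧ I ≠ SSfin S ∧ ((NIc I : ℤ) ≡ (MIc I : ℤ) [ZMOD (r : ℤ)])),
            ((-1 : ℂ) ^ ((NIc I : ℤ) - (MIc I : ℤ))) • (phiD n t (dI S I) - phiD n t (bS S)))

/-- The operator `Z_{k+1/2,r}` on `V^{⊗(k+1)}`; as in `Zop`, but for `S` containing
`k+1` the inner sum is restricted to partitions in which `k+1` and `(k+1)′` lie in the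
same part. -/
def ZopHalf (r n k : ℕ) : TP n (k + 1) →ₗ[ℂ] TP n (k + 1) :=
  (n.choose 2 : ℂ) • LinearMap.id +
  ∑ S ∈ (Finset.univ : Finset (Fin (k + 1))).powerset.filter (fun S => S ≠ ∅),
    ((-1 : ℂ) ^ S.card) •
      (((n : ℂ) - 1) • phiD n (k + 1) (bS S) +
        (1 / 2 : ℂ) •
          ∑ I ∈ (SSfin S).powerset.filter (fun I =>
              I ≠ ∅ ∧ I ≠ SSfin S ∧ ((NIc I : ℤ) ≡ (MIc I : ℤ) [ZMOD (r : ℤ)]) ∧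
              (Fin.last k ∈ S →
                ((Sum.inl (Fin.last k) : Fin (k+1) ⊕ Fin (k+1)) ∈ I ↔
                  (Sum.inr (Fin.last k) : Fin (k+1) ⊕ Fin (k+1)) ∈ I))),
            ((-1 : ℂ) ^ ((NIc I : ℤ) - (MIc I : ℤ))) •
              (phiD n (k + 1) (dI S I) - phiD n (k + 1) (bS S)))

/-- The diagonal action of `κ_{r,n}` on `V^{⊗k}`. -/
def kappaOpFull (r n k : ℕ) : TP n k →ₗ[ℂ] TP n k :=
  (1 / (r : ℂ)) • ∑ l ∈ Finset.range r, ∑ i : Fin n, ∑ j : Fin n,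
    if i < j then tensorPow n k (zijMat n r l i j) else 0

/-- The diagonal action of `κ_{r,n-1}` on `V^{⊗(k+1)}`. -/
def kappaOpL (r n k : ℕ) : TP n (k + 1) →ₗ[ℂ] TP n (k + 1) :=
  (1 / (r : ℂ)) • ∑ l ∈ Finset.range r, ∑ i : Fin n, ∑ j : Fin n,
    if i < j ∧ (j : ℕ) < n - 1 then tensorPow n (k + 1) (zijMat n r l i j) else 0

/-- `w ⊗ v_n ∈ V^{⊗(k+1)}` for `w ∈ V^{⊗k}`. -/
def extendLast (n k : ℕ) (hn : 0 < n) (w : TP n k) : TP n (k + 1) :=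
  fun j => if j (Fin.last k) = lastIdx n hn then w (fun t => j t.castSucc) else 0

/-- `A ⊗ Id_{V^{⊗(l-j)}}` : the extension of an operator on `V^{⊗j}` to `V^{⊗l}`,
acting on the first `j` tensor factors. -/
def extendOp (n j l : ℕ) (hjl : j ≤ l) (A : TP n j →ₗ[ℂ] TP n j) :
    TP n l →ₗ[ℂ] TP n l where
  toFun f := fun u =>
    A (fun x : Fin j → Fin n =>
        f (fun t : Fin l => if h : (t : ℕ) < j then x ⟨t, h⟩ else u t))
      (fun s : Fin j => u (Fin.castLE hjl s))
  map_add' f g := by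
    funext u
    show A (fun x : Fin j → Fin n =>
        (f + g) (fun t : Fin l => if h : (t : ℕ) < j then x ⟨t, h⟩ else u t))
      (fun s : Fin j => u (Fin.castLE hjl s)) =
      A (fun x : Fin j → Fin n =>
        f (fun t : Fin l => if h : (t : ℕ) < j then x ⟨t, h⟩ else u t))
      (fun s : Fin j => u (Fin.castLE hjl s)) +
      A (fun x : Fin j → Fin n =>
        g (fun t : Fin l => if h : (t : ℕ) < j then x ⟨t, h⟩ else u t))
      (fun s : Fin j => u (Fin.castLE hjl s))
    have h : (fun x : Fin j → Fin n =>
        (f + g) (fun t : Fin l => if h : (t : ℕ) < j then x ⟨t, h⟩ else u t)) =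
      (fun x : Fin j → Fin n =>
        f (fun t : Fin l => if h : (t : ℕ) < j then x ⟨t, h⟩ else u t)) +
      (fun x : Fin j → Fin n =>
        g (fun t : Fin l => if h : (t : ℕ) < j then x ⟨t, h⟩ else u t)) := rfl
    rw [h, map_add]
    rfl
  map_smul' c f := by
    funext u
    show A (fun x : Fin j → Fin n =>
        (c • f) (fun t : Fin l => if h : (t : ℕ) < j then x ⟨t, h⟩ else u t))
      (fun s : Fin j => u (Fin.castLE hjl s)) =
      c • (A (fun x : Fin j → Fin n =>
        f (fun t : Fin l => if h : (t : ℕ) < j then x ⟨t, h⟩ else u t))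
      (fun s : Fin j => u (Fin.castLE hjl s)))
    have h : (fun x : Fin j → Fin n =>
        (c • f) (fun t : Fin l => if h : (t : ℕ) < j then x ⟨t, h⟩ else u t)) =
      c • (fun x : Fin j → Fin n =>
        f (fun t : Fin l => if h : (t : ℕ) < j then x ⟨t, h⟩ else u t)) := rfl
    rw [h, _root_.map_smul]
    rfl

/-! ## Diagram multiplication (statement of the structure constants) -/

/-- The bottom row of `d₁` matches the top row of `d₂`. -/
def rowMatch (k : ℕ) (d1 d2 : SP k) : Prop :=
  ∀ i j : Fin k, d1.r (Sum.inr i) (Sum.inr j) ↔ d2.r (Sum.inl i) (Sum.inl j)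

/-- Extend a setoid on `α` along an injection `e : α → β` by singleton classes on
the complement of the range. -/
def extendSetoid {α β : Type*} (e : α → β) (he : Function.Injective e)
    (d : Setoid α) : Setoid β where
  r x y := x = y ∨ ∃ a b, d.r a b ∧ x = e a ∧ y = e b
  iseqv := by
    constructor
    · intro x; exact Or.inl rfl
    · rintro x y (rfl | ⟨a, b, hab, rfl, rfl⟩)
      · exact Or.inl rfl
      · exact Or.inr ⟨b, a, d.iseqv.symm hab, rfl, rfl⟩
    · rintro x y z (rfl | ⟨a, b, hab, rfl, rfl⟩) h2
      · exact h2
      · rcases h2 with rfl | ⟨a', b', hab', hy, rfl⟩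
        · exact Or.inr ⟨a, b, hab, rfl, rfl⟩
        · have hba : b = a' := he hy
          exact Or.inr ⟨a, b', d.iseqv.trans hab (hba ▸ hab'), rfl, rfl⟩

/-- The three-row vertex set: top row, middle row, bottom row. -/
abbrev T3 (k : ℕ) : Type := Fin k ⊕ (Fin k ⊕ Fin k)

/-- `d₁` placed on the top and middle rows. -/
def embT (k : ℕ) : Fin k ⊕ Fin k → T3 k := Sum.map id Sum.inl

/-- `d₂` placed on the middle and bottom rows. -/
def embB (k : ℕ) : Fin k ⊕ Fin k → T3 k := Sum.inr

/-- The outer (top and bottom) rows. -/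
def embO (k : ℕ) : Fin k ⊕ Fin k → T3 k := Sum.map id Sum.inr

lemma embT_inj (k : ℕ) : Function.Injective (embT k) :=
  Function.Injective.sumMap Function.injective_id Sum.inl_injective

/-- The stacked three-row diagram : the join of `d₁` (on top∪middle) and `d₂`
(on middle∪bottom); its classes are the connected components. -/
def stacked (k : ℕ) (d1 d2 : SP k) : Setoid (T3 k) :=
  extendSetoid (embT k) (embT_inj k) d1 ⊔ extendSetoid (embB k) Sum.inr_injective d2

/-- The concatenation `d₁ ∘ d₂`, i.e. the restriction of the stacked diagram to the
outer rows. -/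
def compSetoid (k : ℕ) (d1 d2 : SP k) : SP k :=
  Setoid.comap (embO k) (stacked k d1 d2)

/-- `[d₁ ∘ d₂]` : the number of connected components of the stacked diagram contained
entirely in the middle row. -/
def midCount (k : ℕ) (d1 d2 : SP k) : ℕ :=
  Nat.card {q : Quotient (stacked k d1 d2) //
    ∀ x : T3 k, Quotient.mk (stacked k d1 d2) x = q → ∃ i : Fin k, x = Sum.inr (Sum.inl i)}

/-- A block entirely contained in the top row. -/
def topOnly {k : ℕ} (d : SP k) (q : Quotient d) : Prop :=
  ∀ x, Quotient.mk d x = q → ∃ i : Fin k, x = Sum.inl i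

/-- A block entirely contained in the bottom row. -/
def botOnly {k : ℕ} (d : SP k) (q : Quotient d) : Prop :=
  ∀ x, Quotient.mk d x = q → ∃ i : Fin k, x = Sum.inr i

/-- `x` lies in the block merged from the pair `pr = (q₁, q₂)`. -/
def memPair {k : ℕ} (d1 d2 : SP k) : Fin k ⊕ Fin k → Quotient d1 × Quotient d2 → Prop
  | Sum.inl i, pr => Quotient.mk d1 (Sum.inl i) = pr.1
  | Sum.inr i, pr => Quotient.mk d2 (Sum.inr i) = pr.2

/-- `d` is obtained from `d₁ ∘ d₂` by choosing an injective partial matching between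
the top-only blocks of `d₁` and the bottom-only blocks of `d₂` and merging each
matched pair into a single block. -/
def IsCoarsening (k : ℕ) (d1 d2 d : SP k) : Prop :=
  ∃ P : Finset (Quotient d1 × Quotient d2),
    (∀ pr ∈ P, topOnly d1 pr.1 ∧ botOnly d2 pr.2) ∧
    (∀ pr ∈ P, ∀ pr' ∈ P, pr.1 = pr'.1 → pr = pr') ∧
    (∀ pr ∈ P, ∀ pr' ∈ P, pr.2 = pr'.2 → pr = pr') ∧
    (∀ x y : Fin k ⊕ Fin k, d.r x y ↔
      ((compSetoid k d1 d2).r x y ∨ ∃ pr ∈ P, memPair d1 d2 x pr ∧ memPair d1 d2 y pr))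

/-- The (integer) falling factorial `(a)_b = a(a-1)⋯(a-b+1)`. -/
def fallingC (a : ℤ) (b : ℕ) : ℤ := ∏ i ∈ Finset.range b, (a - i)

/-! ## The elements `c₁, c₂` of `G(2,2,2k)` and the operator `M_{k,2,2}` -/

/-- The underlying function of the permutation `(1 2)(3 4)⋯(2k-1 2k)` of `Fin (2k)`:
it swaps `2t` and `2t+1` (0-indexed) for each `t < k`. -/
def pairFn (k : ℕ) : Fin (2 * k) → Fin (2 * k) := fun x =>
  if _ : (x : ℕ) % 2 = 0 then ⟨(x : ℕ) + 1, by have := x.2; omega⟩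
  else ⟨(x : ℕ) - 1, by have := x.2; omega⟩

lemma pairFn_invol (k : ℕ) : Function.Involutive (pairFn k) := by
  intro x
  unfold pairFn
  split_ifs with h1 h2 h3
  · refine Fin.ext ?_; simp only [Fin.val_mk] at h2 ⊢; omega
  · refine Fin.ext ?_; simp only [Fin.val_mk] at h2 ⊢; omega
  · refine Fin.ext ?_; simp only [Fin.val_mk] at h3 ⊢; omega
  · refine Fin.ext ?_; simp only [Fin.val_mk] at h3 ⊢; omega

/-- The permutation `(1 2)(3 4)⋯(2k-1 2k)` of `Fin (2k)`. -/
def pairPerm (k : ℕ) : Equiv.Perm (Fin (2 * k)) :=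
  Function.Involutive.toPerm (pairFn k) (pairFn_invol k)

/-- `c₂` : the permutation matrix of `(1 2)(3 4)⋯(2k-1 2k)`. -/
def c2Mat (k : ℕ) : Matrix (Fin (2 * k)) (Fin (2 * k)) ℂ :=
  monoMat (2 * k) (pairPerm k) (fun _ => 1)

/-- The diagonal matrix `diag(-1,-1,1,…,1)`. -/
def dMat (k : ℕ) : Matrix (Fin (2 * k)) (Fin (2 * k)) ℂ :=
  Matrix.diagonal fun t => if (t : ℕ) < 2 then (-1 : ℂ) else 1

/-- `c₁ = D · c₂`. -/
def c1Mat (k : ℕ) : Matrix (Fin (2 * k)) (Fin (2 * k)) ℂ := dMat k * c2Mat k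

/-- Two matrices are conjugate by an element of `G(r,p,n)`. -/
def conjIn (r p n : ℕ) (c x : Matrix (Fin n) (Fin n) ℂ) : Prop :=
  ∃ g ∈ GSet r p n, g * c = x * g

/-- The conjugacy class of `c` in `G(r,p,n)`. -/
def conjClass (r p n : ℕ) (c : Matrix (Fin n) (Fin n) ℂ) :
    Set (Matrix (Fin n) (Fin n) ℂ) :=
  {h | h ∈ GSet r p n ∧ conjIn r p n c h}

/-- The set partition of `{1,…,k,1′,…,k′}` all of whose blocks are singletons. -/
def singletonSP (k : ℕ) : SP k := ⟨Eq, eq_equivalence⟩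

/-- The operator `M_{k,2,2} = φ_k(x_{d₀})` on `(ℂ^{2k})^{⊗k}`, where `d₀` is the set
partition with all blocks singletons. -/
def Mop (k : ℕ) : TP (2 * k) k →ₗ[ℂ] TP (2 * k) k :=
  phiX (2 * k) k (singletonSP k)

variable {n k : ℕ}

/-- Indicator (basis) function. -/
def delta (n k : ℕ) (i : Fin k → Fin n) : TP n k := fun j => if j = i then 1 else 0

lemma kernelMap_delta (K : (Fin k → Fin n) → (Fin k → Fin n) → ℂ) (i : Fin k → Fin n)
    (o : Fin k → Fin n) : kernelMap n k K (delta n k i) o = K o i := by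
  show (∑ j : Fin k → Fin n, K o j * delta n k i j) = K o i
  have h1 : ∀ j, K o j * delta n k i j = if j = i then K o j else 0 := by
    intro j
    by_cases h : j = i <;> simp [delta, h]
  simp_rw [h1, Finset.sum_ite_eq' Finset.univ i (fun j => K o j), if_pos (Finset.mem_univ i)]

lemma kernelMap_inj {K K' : (Fin k → Fin n) → (Fin k → Fin n) → ℂ}
    (h : kernelMap n k K = kernelMap n k K') : K = K' := by
  funext o i
  have := congrArg (fun F : TP n k →ₗ[ℂ] TP n k => F (delta n k i) o) h
  simpa [kernelMap_delta] using this

lemma eq_kernelMap (F : TP n k →ₗ[ℂ] TP n k) :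
    F = kernelMap n k (fun o i => F (delta n k i) o) := by
  refine LinearMap.ext fun f => ?_
  have hf : f = ∑ i : Fin k → Fin n, f i • delta n k i := by
    funext j
    have h1 : ∀ i, (f i • delta n k i) j = if j = i then f j else 0 := by
      intro i
      by_cases h : j = i
      · subst h; simp [delta]
      · simp [delta, h]
    show f j = (∑ i : Fin k → Fin n, f i • delta n k i) j
    rw [Finset.sum_apply]
    simp_rw [h1, Finset.sum_ite_eq Finset.univ j (fun _ => f j), if_pos (Finset.mem_univ j)]
  conv_lhs => rw [hf]
  rw [map_sum]
  funext o
  show (∑ i : Fin k → Fin n, F (f i • delta n k i)) o = ∑ i : Fin k → Fin n, _ * f i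
  rw [Finset.sum_apply]
  refine Finset.sum_congr rfl fun i _ => ?_
  rw [LinearMap.map_smul]
  show f i * F (delta n k i) o = F (delta n k i) o * f i
  ring

lemma kernelMap_comp (K K' : (Fin k → Fin n) → (Fin k → Fin n) → ℂ) :
    kernelMap n k K ∘ₗ kernelMap n k K' =
      kernelMap n k (fun o i => ∑ j : Fin k → Fin n, K o j * K' j i) := by
  refine LinearMap.ext fun f => ?_
  funext o
  show (∑ j : Fin k → Fin n, K o j * ∑ i : Fin k → Fin n, K' j i * f i)
      = ∑ i : Fin k → Fin n, (∑ j : Fin k → Fin n, K o j * K' j i) * f i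
  simp_rw [Finset.mul_sum, Finset.sum_mul]
  rw [Finset.sum_comm]
  exact Finset.sum_congr rfl fun i _ => Finset.sum_congr rfl fun j _ => by ring

lemma tensorPow_as_kernel (g : Matrix (Fin n) (Fin n) ℂ) :
    tensorPow n k g = kernelMap n k (fun o i => ∏ t : Fin k, g (o t) (i t)) := rfl

lemma mono_kernel (π : Equiv.Perm (Fin n)) (a : Fin n → ℂ) (o i : Fin k → Fin n) :
    (∏ t : Fin k, monoMat n π a (o t) (i t)) =
      if o = π ∘ i then ∏ t : Fin k, a (i t) else 0 := by
  by_cases h : o = π ∘ i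
  · rw [if_pos h]
    refine Finset.prod_congr rfl fun t _ => ?_
    have : o t = π (i t) := congrFun h t
    simp [monoMat, this]
  · rw [if_neg h]
    obtain ⟨t, ht⟩ := Function.ne_iff.mp h
    refine Finset.prod_eq_zero (Finset.mem_univ t) ?_
    simp only [monoMat, Matrix.of_apply]
    exact if_neg ht

/-- Commutation with the tensor power of a monomial matrix, in kernel form. -/
lemma comm_mono_iff (K : (Fin k → Fin n) → (Fin k → Fin n) → ℂ)
    (π : Equiv.Perm (Fin n)) (a : Fin n → ℂ) :
    kernelMap n k K ∘ₗ tensorPow n k (monoMat n π a)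
      = tensorPow n k (monoMat n π a) ∘ₗ kernelMap n k K ↔
    ∀ o i : Fin k → Fin n,
      K (π ∘ o) (π ∘ i) * (∏ t : Fin k, a (i t)) = (∏ t : Fin k, a (o t)) * K o i := by
  rw [tensorPow_as_kernel, kernelMap_comp, kernelMap_comp]
  constructor
  · intro h o i
    have hK := congrFun (congrFun (kernelMap_inj h) (π ∘ o)) i
    -- LHS: ∑ j, K (π∘o) j * ∏ monoMat (j t) (i t) = K (π∘o) (π∘i) * ∏ a(i t)
    have hL : (∑ j : Fin k → Fin n, K (π ∘ o) j * ∏ t : Fin k, monoMat n π a (j t) (i t))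
        = K (π ∘ o) (π ∘ i) * ∏ t : Fin k, a (i t) := by
      simp_rw [mono_kernel, mul_ite, mul_zero]
      rw [Finset.sum_ite_eq' Finset.univ (π ∘ i)]
      simp
    have hR : (∑ j : Fin k → Fin n, (∏ t : Fin k, monoMat n π a ((π ∘ o) t) (j t)) * K j i)
        = (∏ t : Fin k, a (o t)) * K o i := by
      have hker : ∀ j : Fin k → Fin n,
          (∏ t : Fin k, monoMat n π a ((π ∘ o) t) (j t)) =
            if j = o then ∏ t : Fin k, a (o t) else 0 := by
        intro j
        rw [mono_kernel]
        by_cases hj : j = o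
        · subst hj
          rw [if_pos rfl, if_pos rfl]
        · rw [if_neg hj, if_neg ?_]
          intro hc
          exact hj (funext fun t => π.injective (congrFun hc t).symm)
      simp_rw [hker, ite_mul, zero_mul]
      rw [Finset.sum_ite_eq' Finset.univ o]
      simp
    rw [hL, hR] at hK
    exact hK
  · intro h
    congr 1
    funext o i
    have hL : (∑ j : Fin k → Fin n, K o j * ∏ t : Fin k, monoMat n π a (j t) (i t))
        = K o (π ∘ i) * ∏ t : Fin k, a (i t) := by
      simp_rw [mono_kernel, mul_ite, mul_zero]
      rw [Finset.sum_ite_eq' Finset.univ (π ∘ i)]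
      simp
    have hR : (∑ j : Fin k → Fin n, (∏ t : Fin k, monoMat n π a (o t) (j t)) * K j i)
        = (∏ t : Fin k, a ((π.symm ∘ o) t)) * K (π.symm ∘ o) i := by
      have hker : ∀ j : Fin k → Fin n,
          (∏ t : Fin k, monoMat n π a (o t) (j t)) =
            if j = π.symm ∘ o then ∏ t : Fin k, a (j t) else 0 := by
        intro j
        rw [mono_kernel]
        by_cases hj : j = π.symm ∘ o
        · subst hj
          rw [if_pos ?_, if_pos rfl]
          funext t
          simp
        · rw [if_neg hj, if_neg ?_]
          intro hc
          refine hj (funext fun t => ?_)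
          have := congrFun hc t
          simp only [Function.comp_apply] at this ⊢
          rw [this, Equiv.symm_apply_apply]
      simp_rw [hker, ite_mul, zero_mul]
      rw [Finset.sum_ite_eq' Finset.univ (π.symm ∘ o)]
      simp
    rw [hL, hR]
    have := h (π.symm ∘ o) i
    have h2 : π ∘ (π.symm ∘ o) = o := by
      funext t; simp
    rw [h2] at this
    exact this

example (d : SP k) : Fintype (Quotient d) := inferInstance

/-- Common value of `c` on the block `q`. -/
def bval (d : SP k) (c : Fin k ⊕ Fin k → Fin n) (hc : ∀ a b, d.r a b → c a = c b)
    (q : Quotient d) : Fin n :=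
  Quotient.lift c hc q

lemma bval_mk (d : SP k) (c : Fin k ⊕ Fin k → Fin n) (hc : ∀ a b, d.r a b → c a = c b)
    (x : Fin k ⊕ Fin k) : bval d c hc (Quotient.mk d x) = c x := rfl

lemma bval_inj (d : SP k) (c : Fin k ⊕ Fin k → Fin n)
    (hc : ∀ a b, d.r a b ↔ c a = c b) :
    Function.Injective (bval d c (fun a b h => (hc a b).1 h)) := by
  intro q q' h
  obtain ⟨x, rfl⟩ := Quotient.exists_rep q
  obtain ⟨y, rfl⟩ := Quotient.exists_rep q'
  exact Quotient.sound ((hc x y).2 h)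

lemma topCt_eq (d : SP k) (q : Quotient d) :
    topCt d q = (Finset.univ.filter fun t : Fin k => Quotient.mk d (Sum.inl t) = q).card := by
  rw [topCt, Nat.card_eq_fintype_card]
  convert Fintype.card_subtype (fun t : Fin k => Quotient.mk d (Sum.inl t) = q)

lemma botCt_eq (d : SP k) (q : Quotient d) :
    botCt d q = (Finset.univ.filter fun t : Fin k => Quotient.mk d (Sum.inr t) = q).card := by
  rw [botCt, Nat.card_eq_fintype_card]
  convert Fintype.card_subtype (fun t : Fin k => Quotient.mk d (Sum.inr t) = q)

lemma nBlocks_eq (d : SP k) : nBlocks d = Fintype.card (Quotient d) :=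
  Nat.card_eq_fintype_card

lemma prod_block_top (d : SP k) (c : Fin k ⊕ Fin k → Fin n)
    (hc : ∀ a b, d.r a b → c a = c b) (a : Fin n → ℂ) :
    (∏ t : Fin k, a (c (Sum.inl t))) =
      ∏ q : Quotient d, a (bval d c hc q) ^ topCt d q := by
  rw [← Finset.prod_fiberwise_of_maps_to
    (g := fun t : Fin k => Quotient.mk d (Sum.inl t))
    (fun x _ => Finset.mem_univ _) (fun t => a (c (Sum.inl t)))]
  refine Finset.prod_congr rfl fun q _ => ?_
  rw [topCt_eq]
  have hval : ∀ t ∈ Finset.univ.filter (fun t : Fin k => Quotient.mk d (Sum.inl t) = q),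
      a (c (Sum.inl t)) = a (bval d c hc q) := by
    intro t ht
    have hq := (Finset.mem_filter.mp ht).2
    rw [← hq, bval_mk]
  rw [Finset.prod_congr rfl hval, Finset.prod_const]

lemma prod_block_bot (d : SP k) (c : Fin k ⊕ Fin k → Fin n)
    (hc : ∀ a b, d.r a b → c a = c b) (a : Fin n → ℂ) :
    (∏ t : Fin k, a (c (Sum.inr t))) =
      ∏ q : Quotient d, a (bval d c hc q) ^ botCt d q := by
  rw [← Finset.prod_fiberwise_of_maps_to
    (g := fun t : Fin k => Quotient.mk d (Sum.inr t))
    (fun x _ => Finset.mem_univ _) (fun t => a (c (Sum.inr t)))]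
  refine Finset.prod_congr rfl fun q _ => ?_
  rw [botCt_eq]
  have hval : ∀ t ∈ Finset.univ.filter (fun t : Fin k => Quotient.mk d (Sum.inr t) = q),
      a (c (Sum.inr t)) = a (bval d c hc q) := by
    intro t ht
    have hq := (Finset.mem_filter.mp ht).2
    rw [← hq, bval_mk]
  rw [Finset.prod_congr rfl hval, Finset.prod_const]

lemma nBlocks_le_of_realize (d : SP k) (c : Fin k ⊕ Fin k → Fin n)
    (hc : ∀ a b, d.r a b ↔ c a = c b) : nBlocks d ≤ n := by
  have h := Fintype.card_le_of_injective _ (bval_inj d c hc)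
  rwa [Fintype.card_fin, ← nBlocks_eq] at h

lemma coeX_eq_zero_of_lt (d : SP k) (hd : n < nBlocks d) (c : Fin k ⊕ Fin k → Fin n) :
    coeX n k d c = 0 := by
  rw [coeX, if_neg]
  intro hc
  exact absurd (nBlocks_le_of_realize d c hc) (not_le.mpr hd)

lemma phiX_eq_zero_of_lt (d : SP k) (hd : n < nBlocks d) : phiX n k d = 0 := by
  refine LinearMap.ext fun f => ?_
  funext o
  show (∑ i : Fin k → Fin n, coeX n k d (Sum.elim i o) * f i) = 0
  refine Finset.sum_eq_zero fun i _ => ?_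
  rw [coeX_eq_zero_of_lt d hd, zero_mul]

lemma eq_ker_of_realize {d : SP k} {c : Fin k ⊕ Fin k → Fin n}
    (hc : ∀ a b, d.r a b ↔ c a = c b) : d = Setoid.ker c :=
  Setoid.ext hc

lemma exists_realize (d : SP k) (hd : nBlocks d ≤ n) :
    ∃ c : Fin k ⊕ Fin k → Fin n, ∀ a b, d.r a b ↔ c a = c b := by
  have hcard : Fintype.card (Quotient d) ≤ Fintype.card (Fin n) := by
    rw [Fintype.card_fin, ← nBlocks_eq]; exact hd
  obtain ⟨e⟩ := Function.Embedding.nonempty_of_card_le hcard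
  refine ⟨fun x => e (Quotient.mk d x), fun a b => ?_⟩
  rw [e.injective.eq_iff]
  exact ⟨fun h => Quotient.sound h, fun h => Quotient.exact h⟩

lemma zpow_congr_mod {a : ℂ} (ha : a ≠ 0) {r : ℕ} (har : a ^ r = 1) {x y : ℤ}
    (h : x ≡ y [ZMOD (r:ℤ)]) : a ^ x = a ^ y := by
  obtain ⟨z, hz⟩ := h.dvd
  have hy : y = x + (r:ℤ) * z := by linarith
  rw [hy, zpow_add₀ ha, _root_.zpow_mul, zpow_natCast, har, _root_.one_zpow, mul_one]

lemma pow_congr_mod {a : ℂ} (ha : a ≠ 0) {r : ℕ} (har : a ^ r = 1) {N M : ℕ}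
    (h : (N:ℤ) ≡ (M:ℤ) [ZMOD (r:ℤ)]) : a ^ N = a ^ M := by
  have := zpow_congr_mod ha har h
  rwa [zpow_natCast, zpow_natCast] at this

lemma coeX_comp_inj (d : SP k) (σ : Fin n → Fin n) (hσ : Function.Injective σ)
    (c : Fin k ⊕ Fin k → Fin n) : coeX n k d (σ ∘ c) = coeX n k d c := by
  simp only [coeX, Function.comp_apply, hσ.eq_iff]

lemma prod_eq_of_inA {r p n k : ℕ} (hr : 0 < r) (hk : 0 < k) {d : SP k}
    (hd : inA r p n d) {c : Fin k ⊕ Fin k → Fin n}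
    (hc : ∀ a b, d.r a b ↔ c a = c b)
    {a : Fin n → ℂ} (ha : ∀ i, a i ^ r = 1) (hpa : (∏ i, a i) ^ (r / p) = 1) :
    (∏ t : Fin k, a (c (Sum.inl t))) = ∏ t : Fin k, a (c (Sum.inr t)) := by
  have hc' : ∀ x y, d.r x y → c x = c y := fun x y h => (hc x y).1 h
  have ha0 : ∀ i, a i ≠ 0 := fun i => a_ne_zero hr (ha i)
  set v := bval d c hc' with hv
  rw [prod_block_top d c hc' a, prod_block_bot d c hc' a]
  rcases hd with hPi | hLam | hTheta
  · exact Finset.prod_congr rfl fun q _ => pow_congr_mod (ha0 _) (ha _) (hPi q)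
  · obtain ⟨hnb, hqm, hqq⟩ := hLam
    have hbij : Function.Bijective v := by
      refine (Fintype.bijective_iff_injective_and_card v).2 ⟨bval_inj d c hc, ?_⟩
      rw [Fintype.card_fin, ← nBlocks_eq, hnb]
    set E : Quotient d ≃ Fin n := Equiv.ofBijective v hbij with hE
    set q₀ : Quotient d := Quotient.mk d (Sum.inl ⟨0, hk⟩) with hq₀
    set s : ℤ := (topCt d q₀ : ℤ) - (botCt d q₀ : ℤ) with hs
    have key : ∀ q : Quotient d,
        a (v q) ^ (topCt d q : ℤ) = a (v q) ^ (botCt d q : ℤ) * a (v q) ^ s := by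
      intro q
      rw [← zpow_add₀ (ha0 _)]
      refine zpow_congr_mod (ha0 _) (ha _) ?_
      have h1 := (hqq q q₀).add_right (botCt d q : ℤ)
      calc (topCt d q : ℤ) = (topCt d q : ℤ) - (botCt d q : ℤ) + (botCt d q : ℤ) := by ring
        _ ≡ s + (botCt d q : ℤ) [ZMOD (r:ℤ)] := h1
        _ = (botCt d q : ℤ) + s := by ring
    have hzc : ∀ (x : ℂ) (N : ℕ), x ^ N = x ^ (N : ℤ) := fun x N => (zpow_natCast x N).symm
    calc (∏ q : Quotient d, a (v q) ^ topCt d q)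
        = ∏ q : Quotient d, a (v q) ^ (topCt d q : ℤ) := by
          exact Finset.prod_congr rfl fun q _ => hzc _ _
      _ = ∏ q : Quotient d, (a (v q) ^ (botCt d q : ℤ) * a (v q) ^ s) :=
          Finset.prod_congr rfl fun q _ => key q
      _ = (∏ q : Quotient d, a (v q) ^ (botCt d q : ℤ)) * ∏ q : Quotient d, a (v q) ^ s :=
          Finset.prod_mul_distrib
      _ = (∏ q : Quotient d, a (v q) ^ botCt d q) * (∏ q : Quotient d, a (v q)) ^ s := by
          rw [← Finset.prod_zpow]
          exact congrArg₂ (· * ·) (Finset.prod_congr rfl fun q _ => (hzc _ _).symm) rfl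
      _ = (∏ q : Quotient d, a (v q) ^ botCt d q) * (∏ i : Fin n, a i) ^ s := by
          rw [show (∏ q : Quotient d, a (v q)) = ∏ i : Fin n, a i from Equiv.prod_comp E a]
      _ = ∏ q : Quotient d, a (v q) ^ botCt d q := by
          obtain ⟨u, hu⟩ : ((r / p : ℕ) : ℤ) ∣ s := by
            have h2 := (hqm q₀).1.dvd
            have : ((r / p : ℕ) : ℤ) ∣ -s := by
              rw [hs]; simpa using h2
            exact (dvd_neg.mp this)
          rw [hu, _root_.zpow_mul, zpow_natCast, hpa, _root_.one_zpow, mul_one]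
  · exact absurd (nBlocks_le_of_realize d c hc) (not_le.mpr hTheta.1)

lemma phiX_comm {r p n k : ℕ} (hr : 0 < r) (hk : 0 < k) (d : SP k) (hd : inA r p n d)
    (g : Matrix (Fin n) (Fin n) ℂ) (hg : g ∈ GSet r p n) :
    phiX n k d ∘ₗ tensorPow n k g = tensorPow n k g ∘ₗ phiX n k d := by
  obtain ⟨π, a, ha, hpa, rfl⟩ := hg
  have hphi : phiX n k d = kernelMap n k (fun o i => coeX n k d (Sum.elim i o)) := rfl
  rw [hphi, comm_mono_iff]
  intro o i
  show coeX n k d (Sum.elim (π ∘ i) (π ∘ o)) * (∏ t, a (i t))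
      = (∏ t, a (o t)) * coeX n k d (Sum.elim i o)
  have hinv : coeX n k d (Sum.elim (π ∘ i) (π ∘ o)) = coeX n k d (Sum.elim i o) := by
    have helim : Sum.elim (π ∘ i : Fin k → Fin n) (π ∘ o) = π ∘ Sum.elim i o := by
      funext x; cases x <;> rfl
    rw [helim, coeX_comp_inj d π π.injective]
  rw [hinv]
  by_cases hC : ∀ x y, d.r x y ↔ (Sum.elim i o) x = (Sum.elim i o) y
  · have h1 : coeX n k d (Sum.elim i o) = 1 := by rw [coeX, if_pos hC]
    rw [h1, one_mul, mul_one]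
    have := prod_eq_of_inA hr hk hd hC ha hpa
    simpa using this
  · have h0 : coeX n k d (Sum.elim i o) = 0 := by rw [coeX, if_neg hC]
    rw [h0, zero_mul, mul_zero]

lemma zpow_sum' {x : ℂ} (hx : x ≠ 0) {α : Type*} (s : Finset α) (f : α → ℤ) :
    x ^ (∑ q ∈ s, f q) = ∏ q ∈ s, x ^ f q := by
  induction s using Finset.induction with
  | empty => simp
  | insert a s h ih => rw [Finset.sum_insert h, Finset.prod_insert h, zpow_add₀ hx, ih]

/-- Recognition: the diagonal condition forces membership in `A_k(r,p,n)`. -/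
lemma inA_of_diag {r p n k : ℕ} (hr : 0 < r) (hp : 0 < p) (hpr : p ∣ r) (hk : 0 < k)
    (d : SP k) (c : Fin k ⊕ Fin k → Fin n) (hc : ∀ x y, d.r x y ↔ c x = c y)
    (H : ∀ a : Fin n → ℂ, (∀ i, a i ^ r = 1) → (∏ i, a i) ^ (r / p) = 1 →
         (∏ t : Fin k, a (c (Sum.inl t))) = ∏ t : Fin k, a (c (Sum.inr t))) :
    inA r p n d := by
  have hc' : ∀ x y, d.r x y → c x = c y := fun x y h => (hc x y).1 h
  set v := bval d c hc' with hv
  have hvinj : Function.Injective v := bval_inj d c hc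
  have hζ : IsPrimitiveRoot (zeta r) r := Complex.isPrimitiveRoot_exp r hr.ne'
  have hζ0 : zeta r ≠ 0 := zeta_ne_zero r
  set e : Quotient d → ℤ := fun q => (topCt d q : ℤ) - (botCt d q : ℤ) with he
  -- master divisibility
  have master : ∀ b : Fin n → ℤ, ((p:ℤ) ∣ ∑ i, b i) →
      (r:ℤ) ∣ ∑ q : Quotient d, b (v q) * e q := by
    intro b hb
    set a : Fin n → ℂ := fun x => zeta r ^ (b x) with haa
    have ha : ∀ i, a i ^ r = 1 := by
      intro i
      rw [haa]
      show (zeta r ^ b i) ^ r = 1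
      rw [← zpow_natCast (zeta r ^ b i) r, ← _root_.zpow_mul, mul_comm,
        _root_.zpow_mul, zpow_natCast, zeta_pow_self hr, _root_.one_zpow]
    have hpa : (∏ i, a i) ^ (r / p) = 1 := by
      obtain ⟨u, hu⟩ := hb
      have h1 : (∏ i, a i) = zeta r ^ (∑ i, b i) := (zpow_sum' hζ0 _ _).symm
      rw [h1, hu, ← zpow_natCast _ (r / p), ← _root_.zpow_mul]
      have hrp : (p:ℤ) * ((r / p : ℕ) : ℤ) = (r:ℤ) := by
        exact_mod_cast congrArg (fun x : ℕ => (x:ℤ)) (Nat.mul_div_cancel' hpr)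
      have h2 : (p:ℤ) * u * (r / p : ℕ) = (r:ℤ) * u := by
        calc (p:ℤ) * u * ((r / p : ℕ) : ℤ) = (p:ℤ) * ((r / p : ℕ) : ℤ) * u := by ring
          _ = (r:ℤ) * u := by rw [hrp]
      rw [h2, _root_.zpow_mul, zpow_natCast, zeta_pow_self hr, _root_.one_zpow]
    have hH := H a ha hpa
    rw [prod_block_top d c hc' a, prod_block_bot d c hc' a] at hH
    have htop : (∏ q : Quotient d, a (v q) ^ topCt d q)
        = zeta r ^ (∑ q : Quotient d, b (v q) * (topCt d q : ℤ)) := by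
      rw [zpow_sum' hζ0]
      refine Finset.prod_congr rfl fun q _ => ?_
      show (zeta r ^ b (v q)) ^ (topCt d q : ℕ) = _
      rw [← zpow_natCast (zeta r ^ b (v q)) (topCt d q), ← _root_.zpow_mul]
    have hbot : (∏ q : Quotient d, a (v q) ^ botCt d q)
        = zeta r ^ (∑ q : Quotient d, b (v q) * (botCt d q : ℤ)) := by
      rw [zpow_sum' hζ0]
      refine Finset.prod_congr rfl fun q _ => ?_
      show (zeta r ^ b (v q)) ^ (botCt d q : ℕ) = _
      rw [← zpow_natCast (zeta r ^ b (v q)) (botCt d q), ← _root_.zpow_mul]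
    rw [htop, hbot] at hH
    have hdiff : zeta r ^ ((∑ q : Quotient d, b (v q) * (topCt d q : ℤ))
        - (∑ q : Quotient d, b (v q) * (botCt d q : ℤ))) = 1 := by
      rw [zpow_sub₀ hζ0, hH, div_self]
      exact zpow_ne_zero _ hζ0
    have hdvd := (hζ.zpow_eq_one_iff_dvd _).mp hdiff
    have hsum : (∑ q : Quotient d, b (v q) * (topCt d q : ℤ))
        - (∑ q : Quotient d, b (v q) * (botCt d q : ℤ))
        = ∑ q : Quotient d, b (v q) * e q := by
      rw [← Finset.sum_sub_distrib]
      exact Finset.sum_congr rfl fun q _ => by rw [he]; ring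
    rwa [hsum] at hdvd
  -- single-block tests
  have hm : ∀ q : Quotient d, ((r / p : ℕ) : ℤ) ∣ e q := by
    intro q
    have := master (fun x => if x = v q then (p:ℤ) else 0) (by simp)
    have hsum : (∑ q' : Quotient d, (if v q' = v q then (p:ℤ) else 0) * e q')
        = (p:ℤ) * e q := by
      have h1 : ∀ q' : Quotient d, (if v q' = v q then (p:ℤ) else 0) * e q'
          = if q' = q then (p:ℤ) * e q' else 0 := by
        intro q'
        by_cases h : q' = q
        · subst h; simp
        · rw [if_neg h, if_neg, zero_mul]
          exact fun hc2 => h (hvinj hc2)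
      simp_rw [h1]
      rw [Finset.sum_ite_eq' Finset.univ q, if_pos (Finset.mem_univ q)]
    rw [hsum] at this
    -- r ∣ p * e q, r = p * (r/p)
    obtain ⟨u, hu⟩ := this
    refine ⟨u, ?_⟩
    have hrp : (p:ℤ) * (((r:ℕ)/p : ℕ) : ℤ) = (r:ℤ) := by
      exact_mod_cast congrArg (fun x : ℕ => (x:ℤ)) (Nat.mul_div_cancel' hpr)
    have hpz : (p:ℤ) ≠ 0 := Int.natCast_ne_zero.mpr hp.ne'
    have : (p:ℤ) * e q = (p:ℤ) * (((r:ℕ)/p : ℕ) * u) := by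
      rw [hu, ← hrp]; ring
    exact mul_left_cancel₀ hpz this
  -- pairwise tests
  have hpair : ∀ q q' : Quotient d, (r:ℤ) ∣ e q - e q' := by
    intro q q'
    by_cases hqq : q = q'
    · subst hqq; simp
    · have := master (fun x => (if x = v q then (1:ℤ) else 0) +
        (if x = v q' then (-1:ℤ) else 0)) ?_
      · have hsum : (∑ q'' : Quotient d, ((if v q'' = v q then (1:ℤ) else 0) +
            (if v q'' = v q' then (-1:ℤ) else 0)) * e q'') = e q - e q' := by
          simp_rw [add_mul]
          rw [Finset.sum_add_distrib]
          have h1 : ∀ q'' : Quotient d, (if v q'' = v q then (1:ℤ) else 0) * e q''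
              = if q'' = q then e q'' else 0 := by
            intro q''
            by_cases h : q'' = q
            · subst h; simp
            · rw [if_neg h, if_neg, zero_mul]; exact fun hc2 => h (hvinj hc2)
          have h2 : ∀ q'' : Quotient d, (if v q'' = v q' then (-1:ℤ) else 0) * e q''
              = if q'' = q' then -e q'' else 0 := by
            intro q''
            by_cases h : q'' = q'
            · subst h; simp
            · rw [if_neg h, if_neg, zero_mul]; exact fun hc2 => h (hvinj hc2)
          simp_rw [h1, h2]
          rw [Finset.sum_ite_eq' Finset.univ q, Finset.sum_ite_eq' Finset.univ q']
          simp [sub_eq_add_neg]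
        rwa [hsum] at this
      · have hne : v q ≠ v q' := fun h => hqq (hvinj h)
        have : (∑ i : Fin n, ((if i = v q then (1:ℤ) else 0) +
            (if i = v q' then (-1:ℤ) else 0))) = 0 := by
          rw [Finset.sum_add_distrib, Finset.sum_ite_eq' Finset.univ (v q),
            Finset.sum_ite_eq' Finset.univ (v q')]
          simp
        rw [this]
        exact dvd_zero _
  -- outside test, when nBlocks d < n
  have houtside : nBlocks d < n → ∀ q : Quotient d, (r:ℤ) ∣ e q := by
    intro hlt q
    have hex : ∃ w : Fin n, ∀ q' : Quotient d, v q' ≠ w := by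
      by_contra hcon
      push_neg at hcon
      have hsurj : Function.Surjective v := fun w => by
        obtain ⟨q', hq'⟩ := hcon w
        exact ⟨q', hq'⟩
      have := Fintype.card_le_of_surjective v hsurj
      rw [Fintype.card_fin, ← nBlocks_eq] at this
      omega
    obtain ⟨w, hw⟩ := hex
    have := master (fun x => (if x = v q then (1:ℤ) else 0) +
        (if x = w then (-1:ℤ) else 0)) ?_
    · have hsum : (∑ q'' : Quotient d, ((if v q'' = v q then (1:ℤ) else 0) +
          (if v q'' = w then (-1:ℤ) else 0)) * e q'') = e q := by
        simp_rw [add_mul]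
        rw [Finset.sum_add_distrib]
        have h1 : ∀ q'' : Quotient d, (if v q'' = v q then (1:ℤ) else 0) * e q''
            = if q'' = q then e q'' else 0 := by
          intro q''
          by_cases h : q'' = q
          · subst h; simp
          · rw [if_neg h, if_neg, zero_mul]; exact fun hc2 => h (hvinj hc2)
        have h2 : ∀ q'' : Quotient d, (if v q'' = w then (-1:ℤ) else 0) * e q'' = 0 := by
          intro q''
          rw [if_neg (hw q''), zero_mul]
        simp_rw [h1, h2]
        rw [Finset.sum_ite_eq' Finset.univ q]
        simp
      rwa [hsum] at this
    · have hne : v q ≠ w := hw q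
      have : (∑ i : Fin n, ((if i = v q then (1:ℤ) else 0) +
          (if i = w then (-1:ℤ) else 0))) = 0 := by
        rw [Finset.sum_add_distrib, Finset.sum_ite_eq' Finset.univ (v q),
          Finset.sum_ite_eq' Finset.univ w]
        simp
      rw [this]
      exact dvd_zero _
  -- assemble
  have hnb : nBlocks d ≤ n := nBlocks_le_of_realize d c hc
  have hmodr : ∀ q, ((r:ℤ) ∣ e q) ↔ ((topCt d q : ℤ) ≡ (botCt d q : ℤ) [ZMOD (r:ℤ)]) := by
    intro q
    rw [Int.modEq_iff_dvd, he]
    constructor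
    · intro h; simpa using (dvd_neg.mpr h)
    · intro h; simpa using (dvd_neg.mpr h)
  rcases lt_or_eq_of_le hnb with hlt | heq
  · left
    intro q
    exact (hmodr q).mp (houtside hlt q)
  · by_cases hall : ∀ q : Quotient d, (r:ℤ) ∣ e q
    · left
      intro q
      exact (hmodr q).mp (hall q)
    · right; left
      push_neg at hall
      obtain ⟨q₁, hq₁⟩ := hall
      refine ⟨heq, fun q => ⟨?_, ?_⟩, fun q q' => ?_⟩
      · rw [Int.modEq_iff_dvd]
        have h3 := hm q
        rw [he] at h3
        simpa using (dvd_neg.mpr h3)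
      · rw [← hmodr]
        intro hdq
        have h1 := hpair q₁ q
        exact hq₁ (by
          have : e q₁ = (e q₁ - e q) + e q := by ring
          rw [this]
          exact dvd_add h1 hdq)
      · have h2 := hpair q' q
        have : (topCt d q' : ℤ) - (botCt d q' : ℤ) - ((topCt d q : ℤ) - (botCt d q : ℤ))
            = e q' - e q := by rw [he]
        rw [Int.modEq_iff_dvd, this]
        exact h2

/-- Extend a pattern-equality between two tuples to a permutation of `Fin n`. -/
lemma exists_perm_comp {α : Type*} [Fintype α] (c c' : α → Fin n)
    (h : ∀ a b, c a = c b ↔ c' a = c' b) :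
    ∃ π : Equiv.Perm (Fin n), ∀ a, π (c a) = c' a := by
  set P : Fin n → Prop := fun x => ∃ a, c a = x with hP
  set Q : Fin n → Prop := fun x => ∃ a, c' a = x with hQ
  have key : ∀ (x : {x // P x}), ∃ a, c a = x.1 := fun x => x.2
  have key' : ∀ (x : {x // Q x}), ∃ a, c' a = x.1 := fun x => x.2
  set f : {x // P x} → {x // Q x} :=
    fun x => ⟨c' (Classical.choose (key x)), ⟨_, rfl⟩⟩ with hf
  set g : {x // Q x} → {x // P x} :=
    fun x => ⟨c (Classical.choose (key' x)), ⟨_, rfl⟩⟩ with hg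
  have hfg : ∀ x, g (f x) = x := by
    intro x
    obtain ⟨x, a, rfl⟩ := x
    apply Subtype.ext
    show c (Classical.choose (key' (f ⟨c a, _⟩))) = c a
    have h1 : c' (Classical.choose (key ⟨c a, ⟨a, rfl⟩⟩)) = c' a := by
      have := Classical.choose_spec (key ⟨c a, ⟨a, rfl⟩⟩)
      exact (h _ _).mp this
    have h2 := Classical.choose_spec (key' (f ⟨c a, ⟨a, rfl⟩⟩))
    show c _ = c a
    refine (h _ _).mpr ?_
    rw [h2]
    exact h1
  have hgf : ∀ x, f (g x) = x := by
    intro x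
    obtain ⟨x, a, rfl⟩ := x
    apply Subtype.ext
    have h1 : c (Classical.choose (key' ⟨c' a, ⟨a, rfl⟩⟩)) = c a := by
      have := Classical.choose_spec (key' ⟨c' a, ⟨a, rfl⟩⟩)
      exact (h _ _).mpr this
    have h2 := Classical.choose_spec (key (g ⟨c' a, ⟨a, rfl⟩⟩))
    show c' _ = c' a
    refine (h _ _).mp ?_
    rw [h2]
    exact h1
  set e : {x // P x} ≃ {x // Q x} := ⟨f, g, hfg, hgf⟩ with he
  refine ⟨e.extendSubtype, fun a => ?_⟩
  rw [Equiv.extendSubtype_apply_of_mem e (c a) ⟨a, rfl⟩]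
  show (f ⟨c a, ⟨a, rfl⟩⟩ : Fin n) = c' a
  show c' (Classical.choose (key ⟨c a, ⟨a, rfl⟩⟩)) = c' a
  exact (h _ _).mp (Classical.choose_spec (key ⟨c a, ⟨a, rfl⟩⟩))

instance : Finite (SP k) :=
  Finite.of_injective (fun d : SP k => d.r)
    (fun d d' h => Setoid.ext fun a b => by rw [show d.r = d'.r from h])

/-- The centralizer algebra as a submodule. -/
def centSub (r p n k : ℕ) : Submodule ℂ (TP n k →ₗ[ℂ] TP n k) where
  carrier := centG r p n k
  add_mem' := by
    intro F G hF hG g hg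
    rw [LinearMap.add_comp, LinearMap.comp_add, hF g hg, hG g hg]
  zero_mem' := by
    intro g hg
    rw [LinearMap.zero_comp, LinearMap.comp_zero]
  smul_mem' := by
    intro a F hF g hg
    rw [LinearMap.smul_comp, LinearMap.comp_smul, hF g hg]

lemma kernelMap_ksum {ι : Type*} (s : Finset ι)
    (Ks : ι → (Fin k → Fin n) → (Fin k → Fin n) → ℂ) :
    kernelMap n k (fun o i => ∑ d ∈ s, Ks d o i) = ∑ d ∈ s, kernelMap n k (Ks d) := by
  refine LinearMap.ext fun f => ?_
  funext o
  show (∑ i : Fin k → Fin n, (∑ d ∈ s, Ks d o i) * f i) = _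
  rw [LinearMap.sum_apply, Finset.sum_apply]
  simp_rw [Finset.sum_mul]
  rw [Finset.sum_comm]
  rfl

lemma kernelMap_ksmul (γ : ℂ) (K : (Fin k → Fin n) → (Fin k → Fin n) → ℂ) :
    kernelMap n k (fun o i => γ * K o i) = γ • kernelMap n k K := by
  refine LinearMap.ext fun f => ?_
  funext o
  show (∑ i : Fin k → Fin n, (γ * K o i) * f i) = γ * ∑ i : Fin k → Fin n, K o i * f i
  rw [Finset.mul_sum]
  exact Finset.sum_congr rfl fun i _ => by ring

lemma cent_mem_span {r p n k : ℕ} (hr : 0 < r) (hp : 0 < p) (hpr : p ∣ r) (hk : 0 < k)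
    {F : TP n k →ₗ[ℂ] TP n k} (hF : F ∈ centG r p n k) :
    F ∈ Submodule.span ℂ (TanSet r p n k) := by
  haveI : Fintype (SP k) := Fintype.ofFinite _
  set K : (Fin k → Fin n) → (Fin k → Fin n) → ℂ := fun o i => F (delta n k i) o with hK
  -- invariance under permutations
  have Kinv : ∀ (π : Equiv.Perm (Fin n)) (o i : Fin k → Fin n),
      K (π ∘ o) (π ∘ i) = K o i := by
    intro π o i
    have hmem : monoMat n π (fun _ => 1) ∈ GSet r p n :=
      ⟨π, fun _ => 1, fun _ => one_pow r, by simp, rfl⟩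
    have hcomm := hF _ hmem
    rw [eq_kernelMap F, ← hK] at hcomm
    have := (comm_mono_iff K π (fun _ => 1)).mp hcomm o i
    simpa using this
  -- diagonal relation
  have Kdiag : ∀ (a : Fin n → ℂ), (∀ i, a i ^ r = 1) → (∏ i, a i) ^ (r / p) = 1 →
      ∀ o i : Fin k → Fin n, K o i * (∏ t, a (i t)) = (∏ t, a (o t)) * K o i := by
    intro a ha hpa o i
    have hmem : monoMat n 1 a ∈ GSet r p n := ⟨1, a, ha, hpa, rfl⟩
    have hcomm := hF _ hmem
    rw [eq_kernelMap F, ← hK] at hcomm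
    have := (comm_mono_iff K 1 a).mp hcomm o i
    simpa using this
  set γ : SP k → ℂ := fun d =>
    if h : nBlocks d ≤ n then
      K ((Classical.choose (exists_realize d h)) ∘ Sum.inr)
        ((Classical.choose (exists_realize d h)) ∘ Sum.inl)
    else 0 with hγ
  have hKdecomp : K = fun o i => ∑ d : SP k, γ d * coeX n k d (Sum.elim i o) := by
    funext o i
    set c : Fin k ⊕ Fin k → Fin n := Sum.elim i o with hcdef
    set d₀ : SP k := Setoid.ker c with hd₀
    have hreal₀ : ∀ x y, d₀.r x y ↔ c x = c y := fun x y => Iff.rfl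
    rw [Finset.sum_eq_single d₀]
    · have h1 : coeX n k d₀ c = 1 := by rw [coeX, if_pos hreal₀]
      rw [h1, mul_one]
      have h₀ : nBlocks d₀ ≤ n := nBlocks_le_of_realize d₀ c hreal₀
      rw [hγ]
      simp only [dif_pos h₀]
      set c' := Classical.choose (exists_realize d₀ h₀) with hc'
      have hc'spec := Classical.choose_spec (exists_realize d₀ h₀)
      have hpat : ∀ x y, c' x = c' y ↔ c x = c y := by
        intro x y
        rw [← hc'spec x y, hreal₀ x y]
      obtain ⟨π, hπ⟩ := exists_perm_comp c' c hpat
      have h2 := Kinv π (c' ∘ Sum.inr) (c' ∘ Sum.inl)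
      have h3 : π ∘ (c' ∘ Sum.inr) = o := by
        funext t
        show π (c' (Sum.inr t)) = o t
        rw [hπ]
        rfl
      have h4 : π ∘ (c' ∘ Sum.inl) = i := by
        funext t
        show π (c' (Sum.inl t)) = i t
        rw [hπ]
        rfl
      rw [h3, h4] at h2
      exact h2
    · intro d _ hd
      have h0 : coeX n k d c = 0 := by
        rw [coeX, if_neg]
        intro hcon
        exact hd (eq_ker_of_realize hcon)
      rw [h0, mul_zero]
    · intro hd₀mem
      exact absurd (Finset.mem_univ d₀) hd₀mem
  -- F as a sum
  have hFsum : F = ∑ d : SP k, γ d • phiX n k d := by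
    rw [eq_kernelMap F, ← hK, hKdecomp, kernelMap_ksum]
    refine Finset.sum_congr rfl fun d _ => ?_
    rw [kernelMap_ksmul (γ d) (fun o i => coeX n k d (Sum.elim i o))]
    rfl
  rw [hFsum]
  refine Submodule.sum_mem _ fun d _ => ?_
  by_cases hzero : γ d = 0
  · rw [hzero, zero_smul]
    exact Submodule.zero_mem _
  · refine Submodule.smul_mem _ _ (Submodule.subset_span ?_)
    refine ⟨d, ?_, rfl⟩
    -- γ d ≠ 0: extract the data
    rw [hγ] at hzero
    by_cases h : nBlocks d ≤ n
    · simp only [dif_pos h] at hzero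
      set c' := Classical.choose (exists_realize d h) with hc'
      have hc'spec := Classical.choose_spec (exists_realize d h)
      refine inA_of_diag hr hp hpr hk d c' hc'spec ?_
      intro a ha hpa
      have h5 := Kdiag a ha hpa (c' ∘ Sum.inr) (c' ∘ Sum.inl)
      have h6 : (∏ t : Fin k, a ((c' ∘ Sum.inl) t)) = ∏ t : Fin k, a ((c' ∘ Sum.inr) t) := by
        refine mul_left_cancel₀ hzero ?_
        rw [h5, mul_comm]
      exact h6
    · simp only [dif_neg h] at hzero
      exact absurd trivial hzero

/-- The span of `{φ_k(x_d) : d ∈ A_k(r,p,n)}` equals the centralizer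
algebra `End_{G(r,p,n)}(V^{⊗k})`; the `φ_k(x_d)` with more than `n` blocks vanish;
and for `n ≥ 2k` the family is linearly independent. -/
theorem statement0 (r p n k : ℕ) (hr : 0 < r) (hp : 0 < p) (hn : 0 < n) (hk : 0 < k)
    (hpr : p ∣ r) :
    ((Submodule.span ℂ (TanSet r p n k) :
        Submodule ℂ (TP n k →ₗ[ℂ] TP n k)) : Set (TP n k →ₗ[ℂ] TP n k))
      = centG r p n k ∧
    (∀ d : SP k, inA r p n d → n < nBlocks d → phiX n k d = 0) ∧
    (2 * k ≤ n →
      LinearIndependent ℂ fun d : {d : SP k // inA r p n d} => phiX n k d.1) := by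
  refine ⟨?_, ?_, ?_⟩
  · apply Set.Subset.antisymm
    · have hle : Submodule.span ℂ (TanSet r p n k) ≤ centSub r p n k := by
        rw [Submodule.span_le]
        rintro T ⟨d, hd, rfl⟩
        intro g hg
        exact phiX_comm hr hk d hd g hg
      exact hle
    · intro F hF
      exact cent_mem_span hr hp hpr hk hF
  · intro d _ hlt
    exact phiX_eq_zero_of_lt d hlt
  · intro h2k
    rw [linearIndependent_iff']
    intro s g hsum d₀ hd₀
    have hnb : nBlocks d₀.1 ≤ n := by
      have hsur : Function.Surjective (Quotient.mk d₀.1) := fun q => Quotient.exists_rep q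
      have h1 := Fintype.card_le_of_surjective _ hsur
      rw [← nBlocks_eq] at h1
      have h2 : Fintype.card (Fin k ⊕ Fin k) = 2 * k := by
        rw [Fintype.card_sum, Fintype.card_fin]
        ring
      omega
    obtain ⟨c₀, hc₀⟩ := exists_realize d₀.1 hnb
    have heval := congrArg (fun Fm : TP n k →ₗ[ℂ] TP n k =>
      Fm (delta n k (c₀ ∘ Sum.inl)) (c₀ ∘ Sum.inr)) hsum
    simp only [LinearMap.zero_apply] at heval
    have hLHS : (∑ d ∈ s, g d • phiX n k d.1) (delta n k (c₀ ∘ Sum.inl)) (c₀ ∘ Sum.inr)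
        = ∑ d ∈ s, g d * coeX n k d.1 c₀ := by
      rw [LinearMap.sum_apply, Finset.sum_apply]
      refine Finset.sum_congr rfl fun d _ => ?_
      rw [LinearMap.smul_apply, Pi.smul_apply, smul_eq_mul]
      congr 1
      have hkd := kernelMap_delta (fun o i => coeX n k d.1 (Sum.elim i o))
        (c₀ ∘ Sum.inl) (c₀ ∘ Sum.inr)
      rw [show phiX n k d.1 = kernelMap n k (fun o i => coeX n k d.1 (Sum.elim i o)) from rfl,
        hkd]
      show coeX n k d.1 (Sum.elim (c₀ ∘ Sum.inl) (c₀ ∘ Sum.inr)) = coeX n k d.1 c₀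
      congr 1
      funext x
      cases x <;> rfl
    rw [hLHS] at heval
    rw [Finset.sum_eq_single d₀] at heval
    · have h1 : coeX n k d₀.1 c₀ = 1 := by rw [coeX, if_pos hc₀]
      rw [h1, mul_one] at heval
      exact heval
    · intro d _ hd
      have h0 : coeX n k d.1 c₀ = 0 := by
        rw [coeX, if_neg]
        intro hcon
        apply hd
        apply Subtype.ext
        rw [eq_ker_of_realize hcon, eq_ker_of_realize hc₀]
      rw [h0, mul_zero]
    · intro hmem
      exact absurd hd₀ hmem

end Tanabe
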